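/- Pivoting is symmetric in its two vertices: for adjacent vertices u and v of a simple graph G, G ⋆ u ⋆ v ⋆ u = G ⋆ v ⋆ u ⋆ v. -/

import Mathlib

/-- Local complementation of `G` at `u`: adjacency between two distinct common
neighbors of `u` is toggled; all other adjacencies are unchanged. -/
def localComp {V : Type*} (G : SimpleGraph V) (u : V) : SimpleGraph V where
  Adj v w := v ≠ w ∧ Xor' (G.Adj v w) (G.Adj u v ∧ G.Adj u w)
  symm := ⟨by
    intro v w h
    refine ⟨h.1.symm, ?_⟩
    rcases h.2 with ⟨ha, hb⟩ | ⟨ha, hb⟩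
    · exact Or.inl ⟨G.adj_symm ha, fun hc => hb ⟨hc.2, hc.1⟩⟩
    · exact Or.inr ⟨⟨ha.2, ha.1⟩, fun hc => hb (G.adj_symm hc)⟩⟩
  loopless := ⟨fun v h => h.1 rfl⟩

/-- The pivot of `G` along the edge `uv`: `G ∧ uv = G ⋆ u ⋆ v ⋆ u`. -/
def pivot {V : Type*} (G : SimpleGraph V) (u v : V) : SimpleGraph V :=
  localComp (localComp (localComp G u) v) u

set_option maxHeartbeats 100000000 in
/-- Pivoting is symmetric in its two vertices: `G ⋆ u ⋆ v ⋆ u = G ⋆ v ⋆ u ⋆ v`. -/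
theorem pivot_symm {V : Type*} (G : SimpleGraph V) (u v : V) (h : G.Adj u v) :
    localComp (localComp (localComp G u) v) u
      = localComp (localComp (localComp G v) u) v := by
  have h' : G.Adj v u := h.symm
  have hu : ¬ G.Adj u u := G.irrefl
  have hv : ¬ G.Adj v v := G.irrefl
  have hne : u ≠ v := h.ne
  ext x y
  have hx : ¬ G.Adj x x := G.irrefl
  have hy : ¬ G.Adj y y := G.irrefl
  have sxy : G.Adj x y ↔ G.Adj y x := G.adj_comm x y
  simp only [localComp, Xor', ne_eq]
  by_cases e1 : u = x <;> by_cases e2 : u = y <;> by_cases e3 : v = x <;>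
    by_cases e4 : v = y <;> by_cases e5 : x = y <;>
    by_cases a1 : G.Adj x y <;> by_cases a2 : G.Adj u x <;> by_cases a3 : G.Adj u y <;>
    by_cases a4 : G.Adj v x <;> by_cases a5 : G.Adj v y <;>
    simp_all [eq_comm]
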